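/- arXiv:math/0109074 — 2 statements merged into one kernel-verified Lean document; each statement's English description precedes it below -/
import Mathlib

section
/- Let A be a complex n×n matrix, λ ∈ ℂ, and x, b ∈ ℂⁿ with b ≠ 0 and (λI - A)x = b. Then either ρ_x(A) > ρ_b(A) and ρ_x(A) = |λ|, or ρ_x(A) = ρ_b(A). -/
open Filter Matrix
open scoped Topology

/-- The local spectral radius of a complex matrix `A` at `v`. -/
noncomputable def localRhoC {n : ℕ} (A : Matrix (Fin n) (Fin n) ℂ) (v : Fin n → ℂ) : ℝ :=
  limsup (fun m : ℕ => ‖(A ^ m).mulVec v‖ ^ ((1 : ℝ) / m)) atTop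

namespace Stmt8Aux

noncomputable def rhoSeq {n : ℕ} (A : Matrix (Fin n) (Fin n) ℂ) (v : Fin n → ℂ) (m : ℕ) : ℝ :=
  ‖(A ^ m).mulVec v‖ ^ ((1 : ℝ) / m)

variable {n : ℕ}

lemma localRhoC_eq (A : Matrix (Fin n) (Fin n) ℂ) (v : Fin n → ℂ) :
    localRhoC A v = limsup (rhoSeq A v) atTop := rfl

lemma rhoSeq_nonneg (A : Matrix (Fin n) (Fin n) ℂ) (v : Fin n → ℂ) (m : ℕ) :
    0 ≤ rhoSeq A v m := Real.rpow_nonneg (norm_nonneg _) _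

lemma exists_K (A : Matrix (Fin n) (Fin n) ℂ) :
    ∃ K : ℝ, 1 ≤ K ∧ ∀ (v : Fin n → ℂ) (m : ℕ), ‖(A ^ m).mulVec v‖ ≤ K ^ m * ‖v‖ := by
  set T := LinearMap.toContinuousLinearMap (Matrix.mulVecLin A) with hT
  refine ⟨max 1 ‖T‖, le_max_left _ _, fun v m => ?_⟩
  induction m with
  | zero => simp
  | succ m ih =>
    have h1 : (A ^ (m + 1)).mulVec v = A.mulVec ((A ^ m).mulVec v) := by
      rw [pow_succ', ← Matrix.mulVec_mulVec]
    have h2 : A.mulVec ((A ^ m).mulVec v) = T ((A ^ m).mulVec v) := by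
      simp [hT]
    calc ‖(A ^ (m + 1)).mulVec v‖ = ‖T ((A ^ m).mulVec v)‖ := by rw [h1, h2]
      _ ≤ ‖T‖ * ‖(A ^ m).mulVec v‖ := T.le_opNorm _
      _ ≤ (max 1 ‖T‖) * ((max 1 ‖T‖) ^ m * ‖v‖) :=
          mul_le_mul (le_max_right _ _) ih (norm_nonneg _)
            (le_trans zero_le_one (le_max_left _ _))
      _ = (max 1 ‖T‖) ^ (m + 1) * ‖v‖ := by ring

lemma rhoSeq_bddAbove (A : Matrix (Fin n) (Fin n) ℂ) (v : Fin n → ℂ) :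
    IsBoundedUnder (· ≤ ·) atTop (rhoSeq A v) := by
  obtain ⟨K, hK1, hK⟩ := exists_K A
  have hK0 : 0 < K := lt_of_lt_of_le one_pos hK1
  set M : ℝ := max 1 ‖v‖ with hM
  have hM1 : 1 ≤ M := le_max_left _ _
  refine isBoundedUnder_of ⟨K * M, fun m => ?_⟩
  rcases Nat.eq_zero_or_pos m with hm | hm
  · subst hm
    have : rhoSeq A v 0 = 1 := by simp [rhoSeq]
    rw [this]
    nlinarith
  · have hle : ‖(A ^ m).mulVec v‖ ≤ (K * M) ^ m := by
      calc ‖(A ^ m).mulVec v‖ ≤ K ^ m * ‖v‖ := hK v m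
        _ ≤ K ^ m * M := by
            have : ‖v‖ ≤ M := le_max_right _ _
            nlinarith [pow_pos hK0 m]
        _ ≤ K ^ m * M ^ m := by
            have : M ≤ M ^ m := le_self_pow₀ (by linarith) (by omega)
            nlinarith [pow_pos hK0 m]
        _ = (K * M) ^ m := (mul_pow _ _ _).symm
    have hKM : (0:ℝ) < K * M := by nlinarith
    have hm0 : (m:ℝ) ≠ 0 := Nat.cast_ne_zero.2 (by omega)
    calc rhoSeq A v m ≤ ((K * M) ^ m) ^ ((1:ℝ)/m) :=
          Real.rpow_le_rpow (norm_nonneg _) hle (by positivity)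
      _ = K * M := by
          rw [← Real.rpow_natCast (K * M) m, ← Real.rpow_mul hKM.le, mul_one_div,
            div_self hm0, Real.rpow_one]

lemma rho_nonneg (A : Matrix (Fin n) (Fin n) ℂ) (v : Fin n → ℂ) : 0 ≤ localRhoC A v := by
  rw [localRhoC_eq]
  exact le_limsup_of_frequently_le
    (Frequently.of_forall fun m => rhoSeq_nonneg A v m) (rhoSeq_bddAbove A v)

lemma exists_forall_le {a : ℕ → ℝ} {u : ℝ} (hu : 0 < u) {N : ℕ}
    (h : ∀ m, N ≤ m → a m ≤ u ^ m) : ∃ C, 0 < C ∧ ∀ m, a m ≤ C * u ^ m := by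
  have hS : (0:ℝ) ≤ ∑ k ∈ Finset.range N, |a k| / u ^ k :=
    Finset.sum_nonneg fun k _ => by positivity
  refine ⟨1 + ∑ k ∈ Finset.range N, |a k| / u ^ k, by linarith, fun m => ?_⟩
  rcases le_or_gt N m with hm | hm
  · have h1 := h m hm
    nlinarith [pow_pos hu m]
  · have h1 : |a m| / u ^ m ≤ ∑ k ∈ Finset.range N, |a k| / u ^ k :=
      Finset.single_le_sum (f := fun k => |a k| / u ^ k) (fun k _ => by positivity)
        (Finset.mem_range.2 hm)
    have h2 : a m ≤ |a m| := le_abs_self _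
    have h3 : |a m| = |a m| / u ^ m * u ^ m := by
      field_simp
    nlinarith [pow_pos hu m]

lemma eventual_bound (A : Matrix (Fin n) (Fin n) ℂ) (v : Fin n → ℂ) {t : ℝ} (ht : 0 < t)
    (h : localRhoC A v < t) :
    ∃ C, 0 < C ∧ ∀ m, ‖(A ^ m).mulVec v‖ ≤ C * t ^ m := by
  rw [localRhoC_eq] at h
  have hev : ∀ᶠ m in atTop, rhoSeq A v m < t :=
    eventually_lt_of_limsup_lt h (rhoSeq_bddAbove A v)
  obtain ⟨N, hN⟩ := Filter.eventually_atTop.1 hev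
  refine exists_forall_le ht (N := N + 1) fun m hm => ?_
  have hm1 : (m:ℝ) ≠ 0 := Nat.cast_ne_zero.2 (by omega)
  have h1 : rhoSeq A v m ≤ t := (hN m (by omega)).le
  have h2 : rhoSeq A v m ^ m = ‖(A ^ m).mulVec v‖ := by
    rw [rhoSeq, ← Real.rpow_natCast (‖(A ^ m).mulVec v‖ ^ ((1:ℝ)/m)) m,
      ← Real.rpow_mul (norm_nonneg _), one_div, inv_mul_cancel₀ hm1, Real.rpow_one]
  rw [← h2]
  exact pow_le_pow_left₀ (rhoSeq_nonneg A v m) h1 m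

lemma rho_le_of_bound (A : Matrix (Fin n) (Fin n) ℂ) (v : Fin n → ℂ) {u C : ℝ} (hu : 0 < u)
    (hC : 0 < C) (h : ∀ m, ‖(A ^ m).mulVec v‖ ≤ C * u ^ m) : localRhoC A v ≤ u := by
  have key : ∀ u', u < u' → localRhoC A v ≤ u' := by
    intro u' hu'
    have h1 : Tendsto (fun m : ℕ => ((1:ℝ)/m)) atTop (𝓝 0) :=
      tendsto_one_div_atTop_nhds_zero_nat
    have h2 : Tendsto (fun m : ℕ => C ^ ((1:ℝ)/m)) atTop (𝓝 1) := by
      have := Filter.Tendsto.rpow (tendsto_const_nhds (x := C)) h1 (Or.inl hC.ne')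
      simpa using this
    have htend : Tendsto (fun m : ℕ => C ^ ((1:ℝ)/m) * u) atTop (𝓝 u) := by
      simpa using h2.mul_const u
    have hev2 : ∀ᶠ m : ℕ in atTop, C ^ ((1:ℝ)/m) * u < u' := htend.eventually (gt_mem_nhds hu')
    have hev : ∀ᶠ m in atTop, rhoSeq A v m ≤ u' := by
      filter_upwards [hev2, eventually_ge_atTop 1] with m hm hm1
      have hm0 : (m:ℝ) ≠ 0 := Nat.cast_ne_zero.2 (by omega)
      have hcalc : rhoSeq A v m ≤ C ^ ((1:ℝ)/m) * u := by
        calc rhoSeq A v m ≤ (C * u ^ m) ^ ((1:ℝ)/m) :=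
              Real.rpow_le_rpow (norm_nonneg _) (h m) (by positivity)
          _ = C ^ ((1:ℝ)/m) * u := by
              rw [Real.mul_rpow hC.le (by positivity)]
              congr 1
              rw [← Real.rpow_natCast u m, ← Real.rpow_mul hu.le, mul_one_div,
                div_self hm0, Real.rpow_one]
      exact hcalc.trans hm.le
    rw [localRhoC_eq]
    exact limsup_le_of_le
      (isCoboundedUnder_le_of_le atTop fun m => rhoSeq_nonneg A v m) hev
  by_contra hlt
  push_neg at hlt
  obtain ⟨u', hh1, hh2⟩ := exists_between hlt
  exact absurd (key u' hh1) (not_le.2 hh2)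

end Stmt8Aux

open Stmt8Aux

theorem stmt8 {n : ℕ} (A : Matrix (Fin n) (Fin n) ℂ) (lam : ℂ) (x b : Fin n → ℂ)
    (hb : b ≠ 0) (hsol : (lam • (1 : Matrix (Fin n) (Fin n) ℂ) - A).mulVec x = b) :
    (localRhoC A b < localRhoC A x ∧ localRhoC A x = ‖lam‖) ∨
      localRhoC A x = localRhoC A b := by
  set r := localRhoC A x with hrdef
  set s := localRhoC A b with hsdef
  set L := ‖lam‖ with hLdef
  have hr0 : 0 ≤ r := rho_nonneg A x
  have hs0 : 0 ≤ s := rho_nonneg A b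
  have hL0 : 0 ≤ L := norm_nonneg lam
  -- the basic recursion
  have hrec : ∀ m, (A ^ m).mulVec b = lam • (A ^ m).mulVec x - (A ^ (m + 1)).mulVec x := by
    intro m
    have h1 : (A ^ m).mulVec b
        = (A ^ m).mulVec ((lam • (1 : Matrix (Fin n) (Fin n) ℂ) - A).mulVec x) := by
      rw [hsol]
    rw [h1, Matrix.mulVec_mulVec]
    have h2 : A ^ m * (lam • (1 : Matrix (Fin n) (Fin n) ℂ) - A) = lam • A ^ m - A ^ (m + 1) := by
      rw [mul_sub, mul_smul_comm, mul_one, pow_succ]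
    rw [h2, Matrix.sub_mulVec, Matrix.smul_mulVec]
  -- the iterated identity
  have hid : ∀ m j, lam ^ j • (A ^ m).mulVec x =
      (A ^ (m + j)).mulVec x
        + ∑ i ∈ Finset.range j, lam ^ (j - 1 - i) • (A ^ (m + i)).mulVec b := by
    intro m j
    induction j with
    | zero => simp
    | succ j ih =>
      have step : lam • (A ^ (m + j)).mulVec x =
          (A ^ (m + j + 1)).mulVec x + (A ^ (m + j)).mulVec b := by
        rw [hrec (m + j)]
        abel
      calc lam ^ (j + 1) • (A ^ m).mulVec x
          = lam • (lam ^ j • (A ^ m).mulVec x) := by rw [smul_smul, ← pow_succ']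
        _ = lam • (A ^ (m + j)).mulVec x
            + ∑ i ∈ Finset.range j, (lam * lam ^ (j - 1 - i)) • (A ^ (m + i)).mulVec b := by
            rw [ih, smul_add, Finset.smul_sum]
            simp [smul_smul]
        _ = (A ^ (m + j + 1)).mulVec x + ((A ^ (m + j)).mulVec b
            + ∑ i ∈ Finset.range j, lam ^ (j - i) • (A ^ (m + i)).mulVec b) := by
            rw [step, add_assoc]
            congr 2
            refine Finset.sum_congr rfl fun i hi => ?_
            have hij : i < j := Finset.mem_range.1 hi
            have he : j - i = (j - 1 - i) + 1 := by omega
            rw [he, pow_succ]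
            ring_nf
        _ = (A ^ (m + (j + 1))).mulVec x
            + ∑ i ∈ Finset.range (j + 1), lam ^ (j + 1 - 1 - i) • (A ^ (m + i)).mulVec b := by
            rw [Finset.sum_range_succ]
            simp only [show ∀ i, j + 1 - 1 - i = j - i from fun i => by omega,
              Nat.sub_self, pow_zero, one_smul, show m + (j + 1) = m + j + 1 from rfl]
            abel
  -- norm versions
  have hnorm : ∀ m j, L ^ j * ‖(A ^ m).mulVec x‖ ≤
      ‖(A ^ (m + j)).mulVec x‖
        + ∑ i ∈ Finset.range j, L ^ (j - 1 - i) * ‖(A ^ (m + i)).mulVec b‖ := by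
    intro m j
    have h1 : ‖lam ^ j • (A ^ m).mulVec x‖ = L ^ j * ‖(A ^ m).mulVec x‖ := by
      rw [norm_smul, norm_pow, ← hLdef]
    rw [← h1, hid m j]
    refine (norm_add_le _ _).trans (add_le_add_right ?_ _)
    refine (norm_sum_le _ _).trans (le_of_eq (Finset.sum_congr rfl fun i _ => ?_))
    rw [norm_smul, norm_pow, ← hLdef]
  have hnorm2 : ∀ j, ‖(A ^ j).mulVec x‖ ≤
      L ^ j * ‖x‖ + ∑ i ∈ Finset.range j, L ^ (j - 1 - i) * ‖(A ^ i).mulVec b‖ := by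
    intro j
    have h := hid 0 j
    simp only [zero_add] at h
    have hx0 : (A ^ 0).mulVec x = x := by simp
    rw [hx0] at h
    have h2 : (A ^ j).mulVec x
        = lam ^ j • x - ∑ i ∈ Finset.range j, lam ^ (j - 1 - i) • (A ^ i).mulVec b := by
      rw [h]
      abel
    rw [h2]
    refine (norm_sub_le _ _).trans (add_le_add ?_ ?_)
    · rw [norm_smul, norm_pow, ← hLdef]
    · refine (norm_sum_le _ _).trans (le_of_eq (Finset.sum_congr rfl fun i _ => ?_))
      rw [norm_smul, norm_pow, ← hLdef]
  -- step (i) : s ≤ r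
  have hsr : s ≤ r := by
    have key : ∀ t, r < t → s ≤ t := by
      intro t hrt
      have ht : 0 < t := lt_of_le_of_lt hr0 hrt
      obtain ⟨C, hC, hCb⟩ := eventual_bound A x ht hrt
      refine rho_le_of_bound A b ht (C := C * (L + t)) (by positivity) fun m => ?_
      calc ‖(A ^ m).mulVec b‖ = ‖lam • (A ^ m).mulVec x - (A ^ (m + 1)).mulVec x‖ := by
            rw [hrec]
        _ ≤ L * ‖(A ^ m).mulVec x‖ + ‖(A ^ (m + 1)).mulVec x‖ := by
            refine (norm_sub_le _ _).trans ?_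
            rw [norm_smul, ← hLdef]
        _ ≤ L * (C * t ^ m) + C * t ^ (m + 1) :=
            add_le_add (mul_le_mul_of_nonneg_left (hCb m) hL0) (hCb (m + 1))
        _ = C * (L + t) * t ^ m := by ring
    by_contra hlt
    push_neg at hlt
    obtain ⟨t, hh1, hh2⟩ := exists_between hlt
    exact absurd (key t hh1) (not_le.2 hh2)
  by_cases hcase : s < r
  · -- show r = L
    left
    refine ⟨hcase, ?_⟩
    rcases lt_trichotomy L r with hLr | hE | hrL
    · exfalso
      have hw : max L s < r := max_lt hLr hcase
      obtain ⟨t, hwt, htr⟩ := exists_between hw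
      obtain ⟨u, htu, hur⟩ := exists_between htr
      have hLt : L ≤ t := le_of_lt (lt_of_le_of_lt (le_max_left _ _) hwt)
      have hst : s < t := lt_of_le_of_lt (le_max_right _ _) hwt
      have ht0 : 0 < t := lt_of_le_of_lt hs0 hst
      have hu0 : 0 < u := lt_trans ht0 htu
      obtain ⟨Cb, hCb0, hCb⟩ := eventual_bound A b ht0 hst
      have e1 : ∀ j : ℕ, ((j:ℝ)) * (t ^ (j - 1) * t) = j * t ^ j := by
        intro j
        cases j with
        | zero => simp
        | succ k => simp [pow_succ]
      have hbound : ∀ j : ℕ, t * ‖(A ^ j).mulVec x‖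
          ≤ ‖x‖ * t ^ (j + 1) + Cb * j * t ^ j := by
        intro j
        have hsum : ∑ i ∈ Finset.range j, L ^ (j - 1 - i) * ‖(A ^ i).mulVec b‖
            ≤ (j:ℝ) * (Cb * t ^ (j - 1)) := by
          calc ∑ i ∈ Finset.range j, L ^ (j - 1 - i) * ‖(A ^ i).mulVec b‖
              ≤ ∑ i ∈ Finset.range j, t ^ (j - 1 - i) * (Cb * t ^ i) := by
                refine Finset.sum_le_sum fun i hi => ?_
                exact mul_le_mul (pow_le_pow_left₀ hL0 hLt _) (hCb i) (norm_nonneg _)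
                  (pow_nonneg ht0.le _)
            _ = ∑ i ∈ Finset.range j, Cb * t ^ (j - 1) := by
                refine Finset.sum_congr rfl fun i hi => ?_
                have hij : i < j := Finset.mem_range.1 hi
                have hexp : t ^ (j - 1 - i) * t ^ i = t ^ (j - 1) := by
                  rw [← pow_add]
                  congr 1
                  omega
                rw [← hexp]
                ring
            _ = (j:ℝ) * (Cb * t ^ (j - 1)) := by
                rw [Finset.sum_const, Finset.card_range, nsmul_eq_mul]
        have hLx : L ^ j * ‖x‖ ≤ t ^ j * ‖x‖ :=
          mul_le_mul_of_nonneg_right (pow_le_pow_left₀ hL0 hLt j) (norm_nonneg x)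
        have hmul : t * ‖(A ^ j).mulVec x‖
            ≤ t * (t ^ j * ‖x‖ + (j:ℝ) * (Cb * t ^ (j - 1))) := by
          refine mul_le_mul_of_nonneg_left ?_ ht0.le
          calc ‖(A ^ j).mulVec x‖
              ≤ L ^ j * ‖x‖ + ∑ i ∈ Finset.range j, L ^ (j - 1 - i) * ‖(A ^ i).mulVec b‖ :=
                hnorm2 j
            _ ≤ t ^ j * ‖x‖ + (j:ℝ) * (Cb * t ^ (j - 1)) := add_le_add hLx hsum
        refine hmul.trans (le_of_eq ?_)
        calc t * (t ^ j * ‖x‖ + (j:ℝ) * (Cb * t ^ (j - 1)))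
            = ‖x‖ * (t ^ j * t) + Cb * ((j:ℝ) * (t ^ (j - 1) * t)) := by ring
          _ = ‖x‖ * t ^ (j + 1) + Cb * j * t ^ j := by
              rw [e1 j, pow_succ]
              ring
      -- decay of the comparison sequence
      have hq0 : (0:ℝ) ≤ t / u := by positivity
      have hq1 : t / u < 1 := (div_lt_one hu0).2 htu
      have h1 : Tendsto (fun j : ℕ => (t / u) ^ j) atTop (𝓝 0) :=
        tendsto_pow_atTop_nhds_zero_of_lt_one hq0 hq1
      have hut : 1 < u / t := (one_lt_div ht0).2 htu
      have h2 : Tendsto (fun j : ℕ => (j : ℝ) * (t / u) ^ j) atTop (𝓝 0) := by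
        have h2' := tendsto_pow_const_div_const_pow_of_one_lt 1 hut
        have heq : ∀ j : ℕ, (j : ℝ) ^ 1 / (u / t) ^ j = (j : ℝ) * (t / u) ^ j := by
          intro j
          rw [pow_one, div_pow, div_pow, div_div_eq_mul_div, mul_div_assoc]
        simp only [heq] at h2'
        exact h2'
      have htc : Tendsto (fun j : ℕ => ‖x‖ * t * (t / u) ^ j + Cb * ((j : ℝ) * (t / u) ^ j))
          atTop (𝓝 0) := by
        have := (h1.const_mul (‖x‖ * t)).add (h2.const_mul Cb)
        simpa using this
      have hev : ∀ᶠ j : ℕ in atTop,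
          ‖x‖ * t * (t / u) ^ j + Cb * ((j : ℝ) * (t / u) ^ j) < t :=
        htc.eventually (gt_mem_nhds ht0)
      obtain ⟨N, hN⟩ := Filter.eventually_atTop.1 hev
      have hfin : ∀ j : ℕ, N ≤ j → ‖(A ^ j).mulVec x‖ ≤ u ^ j := by
        intro j hj
        have hupow : (0:ℝ) < u ^ j := pow_pos hu0 j
        refine le_of_mul_le_mul_left ?_ ht0
        have e0 : (t / u) ^ j * u ^ j = t ^ j := by
          rw [div_pow, div_mul_cancel₀ _ hupow.ne']
        have e2 : ‖x‖ * t ^ (j + 1) + Cb * j * t ^ j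
            = (‖x‖ * t * (t / u) ^ j + Cb * ((j:ℝ) * (t / u) ^ j)) * u ^ j := by
          have hr : ‖x‖ * t * ((t / u) ^ j * u ^ j) + Cb * ((j:ℝ) * ((t / u) ^ j * u ^ j))
              = (‖x‖ * t * (t / u) ^ j + Cb * ((j:ℝ) * (t / u) ^ j)) * u ^ j := by ring
          rw [e0] at hr
          rw [← hr, pow_succ]
          ring
        calc t * ‖(A ^ j).mulVec x‖ ≤ ‖x‖ * t ^ (j + 1) + Cb * j * t ^ j := hbound j
          _ = (‖x‖ * t * (t / u) ^ j + Cb * ((j:ℝ) * (t / u) ^ j)) * u ^ j := e2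
          _ ≤ t * u ^ j := mul_le_mul_of_nonneg_right (hN j hj).le hupow.le
      obtain ⟨C2, hC2, hC2b⟩ := exists_forall_le hu0 hfin
      have : r ≤ u := rho_le_of_bound A x hu0 hC2 hC2b
      exact absurd this (not_le.2 hur)
    · exact hE.symm
    · exfalso
      have hL0' : 0 < L := lt_of_le_of_lt hr0 hrL
      obtain ⟨t, hrt, htL⟩ := exists_between hrL
      have ht0 : 0 < t := lt_of_le_of_lt hr0 hrt
      obtain ⟨Cx, hCx0, hCx⟩ := eventual_bound A x ht0 hrt
      have hsm : s < min r L := lt_min hcase (lt_trans hcase hrL)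
      obtain ⟨u, hsu, humin⟩ := exists_between hsm
      have hur : u < r := lt_of_lt_of_le humin (min_le_left _ _)
      have huL : u < L := lt_of_lt_of_le humin (min_le_right _ _)
      have hu0 : 0 < u := lt_of_le_of_lt hs0 hsu
      have hLu : 0 < L - u := sub_pos.2 huL
      obtain ⟨Cb, hCb0, hCb⟩ := eventual_bound A b hu0 hsu
      have key : ∀ m, ‖(A ^ m).mulVec x‖ ≤ Cb / (L - u) * u ^ m := by
        intro m
        have hj : ∀ j : ℕ, ‖(A ^ m).mulVec x‖
            ≤ Cx * t ^ m * (t / L) ^ j + Cb / (L - u) * u ^ m := by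
          intro j
          have hLj : (0:ℝ) < L ^ j := pow_pos hL0' j
          refine le_of_mul_le_mul_left ?_ hLj
          have hsum : ∑ i ∈ Finset.range j, L ^ (j - 1 - i) * u ^ i ≤ L ^ j / (L - u) := by
            rw [le_div_iff₀ hLu]
            have htel : (∑ i ∈ Finset.range j, L ^ (j - 1 - i) * u ^ i) * (L - u)
                = L ^ j - u ^ j := by
              rw [Finset.sum_mul]
              calc ∑ i ∈ Finset.range j, L ^ (j - 1 - i) * u ^ i * (L - u)
                  = ∑ i ∈ Finset.range j, (L ^ (j - i) * u ^ i - L ^ (j - (i+1)) * u ^ (i+1)) := by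
                    refine Finset.sum_congr rfl fun i hi => ?_
                    have hij : i < j := Finset.mem_range.1 hi
                    have he1 : j - i = (j - 1 - i) + 1 := by omega
                    have he2 : j - (i + 1) = j - 1 - i := by omega
                    rw [he1, he2, pow_succ]
                    ring
                _ = L ^ (j - 0) * u ^ 0 - L ^ (j - j) * u ^ j :=
                    Finset.sum_range_sub' (fun i => L ^ (j - i) * u ^ i) j
                _ = L ^ j - u ^ j := by simp
            rw [htel]
            nlinarith [pow_nonneg hu0.le j]
          have e0 : (t / L) ^ j * L ^ j = t ^ j := by
            rw [div_pow, div_mul_cancel₀ _ hLj.ne']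
          calc L ^ j * ‖(A ^ m).mulVec x‖
              ≤ ‖(A ^ (m + j)).mulVec x‖
                + ∑ i ∈ Finset.range j, L ^ (j - 1 - i) * ‖(A ^ (m + i)).mulVec b‖ := hnorm m j
            _ ≤ Cx * t ^ (m + j)
                + ∑ i ∈ Finset.range j, L ^ (j - 1 - i) * (Cb * u ^ (m + i)) := by
                refine add_le_add (hCx _) (Finset.sum_le_sum fun i hi => ?_)
                exact mul_le_mul_of_nonneg_left (hCb _) (pow_nonneg hL0 _)
            _ = Cx * t ^ (m + j)
                + Cb * u ^ m * ∑ i ∈ Finset.range j, L ^ (j - 1 - i) * u ^ i := by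
                rw [Finset.mul_sum]
                congr 1
                refine Finset.sum_congr rfl fun i hi => ?_
                rw [pow_add]
                ring
            _ ≤ Cx * t ^ (m + j) + Cb * u ^ m * (L ^ j / (L - u)) :=
                add_le_add_right (mul_le_mul_of_nonneg_left hsum (by positivity)) _
            _ = L ^ j * (Cx * t ^ m * (t / L) ^ j + Cb / (L - u) * u ^ m) := by
                rw [pow_add, ← e0]
                ring
        have htd : Tendsto (fun j : ℕ => Cx * t ^ m * (t / L) ^ j + Cb / (L - u) * u ^ m)
            atTop (𝓝 (0 + Cb / (L - u) * u ^ m)) := by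
          refine Tendsto.add ?_ tendsto_const_nhds
          have h0 : Tendsto (fun j : ℕ => (t / L) ^ j) atTop (𝓝 0) :=
            tendsto_pow_atTop_nhds_zero_of_lt_one (by positivity) ((div_lt_one hL0').2 htL)
          simpa using h0.const_mul (Cx * t ^ m)
        have hle := ge_of_tendsto htd (Eventually.of_forall hj)
        simpa using hle
      have : r ≤ u := rho_le_of_bound A x hu0 (by positivity) key
      exact absurd this (not_le.2 hur)
  · right
    exact le_antisymm (not_lt.1 hcase) hsr
end

section
/- Let A be a complex n×n matrix, b ∈ ℂⁿ nonzero, and λ ∈ ℂ with |λ| > ρ_b(A). Then x⁰ = ∑_{j=0}^∞ λ^{-j-1} A^j b converges, satisfies (λI - A)x⁰ = b, and ρ_{x⁰}(A) = ρ_b(A); moreover any other solution x of (λI - A)x = b satisfies ρ_x(A) = |λ|. -/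
open Filter Matrix
open scoped Topology

section helpers
variable {n : ℕ}

lemma rpow_pow_one_div {x : ℝ} (hx : 0 ≤ x) {m : ℕ} (hm : m ≠ 0) :
    (x ^ m) ^ ((1:ℝ)/m) = x := by
  rw [← Real.rpow_natCast x m, ← Real.rpow_mul hx, mul_one_div,
    div_self (Nat.cast_ne_zero.mpr hm), Real.rpow_one]

lemma pow_rpow_one_div {x : ℝ} (hx : 0 ≤ x) {m : ℕ} (hm : m ≠ 0) :
    (x ^ ((1:ℝ)/m)) ^ m = x := by
  rw [← Real.rpow_natCast (x ^ ((1:ℝ)/m)) m, ← Real.rpow_mul hx, one_div_mul_cancel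
    (Nat.cast_ne_zero.mpr hm : (m:ℝ) ≠ 0), Real.rpow_one]

noncomputable def mvL (A : Matrix (Fin n) (Fin n) ℂ) : (Fin n → ℂ) →L[ℂ] (Fin n → ℂ) :=
  LinearMap.toContinuousLinearMap A.mulVecLin

@[simp] lemma mvL_apply (A : Matrix (Fin n) (Fin n) ℂ) (v : Fin n → ℂ) :
    mvL A v = A.mulVec v := by
  simp [mvL, LinearMap.coe_toContinuousLinearMap']

lemma pow_mulVec_succ (A : Matrix (Fin n) (Fin n) ℂ) (v : Fin n → ℂ) (m : ℕ) :
    (A ^ (m+1)).mulVec v = A.mulVec ((A ^ m).mulVec v) := by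
  rw [Matrix.mulVec_mulVec, ← pow_succ']

lemma norm_pow_mulVec_le (A : Matrix (Fin n) (Fin n) ℂ) (v : Fin n → ℂ) (m : ℕ) :
    ‖(A ^ m).mulVec v‖ ≤ (max ‖mvL A‖ 1) ^ m * ‖v‖ := by
  induction m with
  | zero => simp [Matrix.one_mulVec]
  | succ m ih =>
    rw [pow_mulVec_succ]
    calc ‖A.mulVec ((A ^ m).mulVec v)‖ = ‖mvL A ((A ^ m).mulVec v)‖ := by rw [mvL_apply]
      _ ≤ ‖mvL A‖ * ‖(A ^ m).mulVec v‖ := (mvL A).le_opNorm _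
      _ ≤ (max ‖mvL A‖ 1) * ((max ‖mvL A‖ 1) ^ m * ‖v‖) := by
          apply mul_le_mul (le_max_left _ _) ih (norm_nonneg _)
          exact le_trans zero_le_one (le_max_right _ _)
      _ = (max ‖mvL A‖ 1) ^ (m+1) * ‖v‖ := by ring

lemma localRho_seq_bdd (A : Matrix (Fin n) (Fin n) ℂ) (v : Fin n → ℂ) :
    ∀ m : ℕ, ‖(A ^ m).mulVec v‖ ^ ((1:ℝ)/m) ≤ (‖v‖ + 1) * (max ‖mvL A‖ 1) := by
  intro m
  have hM1 : (1:ℝ) ≤ max ‖mvL A‖ 1 := le_max_right _ _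
  have hM0 : (0:ℝ) ≤ max ‖mvL A‖ 1 := le_trans zero_le_one hM1
  have hv1 : (1:ℝ) ≤ ‖v‖ + 1 := le_add_of_nonneg_left (norm_nonneg _)
  have hv0 : (0:ℝ) ≤ ‖v‖ + 1 := le_trans zero_le_one hv1
  rcases Nat.eq_zero_or_pos m with rfl | hm
  · simpa using one_le_mul_of_one_le_of_one_le hv1 hM1
  · have hm' : m ≠ 0 := hm.ne'
    have h1 : ‖(A ^ m).mulVec v‖ ≤ (‖v‖ + 1) * (max ‖mvL A‖ 1) ^ m := by
      calc ‖(A ^ m).mulVec v‖ ≤ (max ‖mvL A‖ 1) ^ m * ‖v‖ := norm_pow_mulVec_le A v m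
        _ ≤ (max ‖mvL A‖ 1) ^ m * (‖v‖ + 1) := by nlinarith [pow_nonneg hM0 m]
        _ = (‖v‖ + 1) * (max ‖mvL A‖ 1) ^ m := mul_comm _ _
    calc ‖(A ^ m).mulVec v‖ ^ ((1:ℝ)/m)
        ≤ ((‖v‖ + 1) * (max ‖mvL A‖ 1) ^ m) ^ ((1:ℝ)/m) :=
          Real.rpow_le_rpow (norm_nonneg _) h1 (by positivity)
      _ = (‖v‖ + 1) ^ ((1:ℝ)/m) * ((max ‖mvL A‖ 1) ^ m) ^ ((1:ℝ)/m) :=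
          Real.mul_rpow hv0 (pow_nonneg hM0 m)
      _ = (‖v‖ + 1) ^ ((1:ℝ)/m) * (max ‖mvL A‖ 1) := by rw [rpow_pow_one_div hM0 hm']
      _ ≤ (‖v‖ + 1) ^ (1:ℝ) * (max ‖mvL A‖ 1) := by
          apply mul_le_mul_of_nonneg_right _ hM0
          exact Real.rpow_le_rpow_of_exponent_le hv1 (by
            rw [div_le_one (by exact_mod_cast hm)]; exact_mod_cast hm)
      _ = (‖v‖ + 1) * (max ‖mvL A‖ 1) := by rw [Real.rpow_one]

lemma localRho_isBdd (A : Matrix (Fin n) (Fin n) ℂ) (v : Fin n → ℂ) :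
    IsBoundedUnder (· ≤ ·) atTop (fun m : ℕ => ‖(A ^ m).mulVec v‖ ^ ((1:ℝ)/m)) :=
  isBoundedUnder_of ⟨(‖v‖ + 1) * (max ‖mvL A‖ 1), fun m => localRho_seq_bdd A v m⟩

lemma localRho_isCobdd (A : Matrix (Fin n) (Fin n) ℂ) (v : Fin n → ℂ) :
    IsCoboundedUnder (· ≤ ·) atTop (fun m : ℕ => ‖(A ^ m).mulVec v‖ ^ ((1:ℝ)/m)) := by
  apply Filter.IsBoundedUnder.isCoboundedUnder_le
  exact isBoundedUnder_of ⟨0, fun m => Real.rpow_nonneg (norm_nonneg _) _⟩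

lemma localRhoC_nonneg (A : Matrix (Fin n) (Fin n) ℂ) (v : Fin n → ℂ) :
    0 ≤ localRhoC A v := by
  apply Filter.le_limsup_of_frequently_le _ (localRho_isBdd A v)
  exact Frequently.of_forall fun m => Real.rpow_nonneg (norm_nonneg _) _

end helpers

section quant
variable {n : ℕ}

lemma tendsto_rpow_one_div {C : ℝ} (hC : 0 < C) :
    Tendsto (fun m : ℕ => C ^ ((1:ℝ)/m)) atTop (𝓝 1) := by
  have h1 : Tendsto (fun m : ℕ => (1:ℝ)/m) atTop (𝓝 0) := tendsto_one_div_atTop_nhds_zero_nat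
  have h2 := (Real.continuousAt_const_rpow (b := (0:ℝ)) hC.ne').tendsto.comp h1
  simpa [Function.comp_def] using h2

lemma localRho_le (A : Matrix (Fin n) (Fin n) ℂ) (v : Fin n → ℂ) {C r : ℝ}
    (hC : 1 ≤ C) (hr : 0 < r) (h : ∀ m, ‖(A ^ m).mulVec v‖ ≤ C * r ^ m) :
    localRhoC A v ≤ r := by
  unfold localRhoC
  have hC0 : (0:ℝ) < C := lt_of_lt_of_le one_pos hC
  have hg : Tendsto (fun m : ℕ => C ^ ((1:ℝ)/m) * r) atTop (𝓝 r) := by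
    simpa using (tendsto_rpow_one_div hC0).mul_const r
  have hle : ∀ᶠ m : ℕ in atTop, ‖(A ^ m).mulVec v‖ ^ ((1:ℝ)/m) ≤ C ^ ((1:ℝ)/m) * r := by
    filter_upwards [eventually_ge_atTop 1] with m hm
    have hm' : m ≠ 0 := Nat.one_le_iff_ne_zero.mp hm
    calc ‖(A ^ m).mulVec v‖ ^ ((1:ℝ)/m) ≤ (C * r ^ m) ^ ((1:ℝ)/m) :=
          Real.rpow_le_rpow (norm_nonneg _) (h m) (by positivity)
      _ = C ^ ((1:ℝ)/m) * (r ^ m) ^ ((1:ℝ)/m) := Real.mul_rpow hC0.le (pow_nonneg hr.le m)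
      _ = C ^ ((1:ℝ)/m) * r := by rw [rpow_pow_one_div hr.le hm']
  calc limsup (fun m : ℕ => ‖(A ^ m).mulVec v‖ ^ ((1:ℝ)/m)) atTop ≤ limsup (fun m : ℕ => C ^ ((1:ℝ)/m) * r) atTop :=
        limsup_le_limsup hle (localRho_isCobdd A v) hg.isBoundedUnder_le
    _ = r := hg.limsup_eq

lemma exists_bound_of_localRho_lt (A : Matrix (Fin n) (Fin n) ℂ) (v : Fin n → ℂ) {r : ℝ}
    (hr : 0 < r) (h : localRhoC A v < r) :
    ∃ C : ℝ, 1 ≤ C ∧ ∀ m, ‖(A ^ m).mulVec v‖ ≤ C * r ^ m := by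
  unfold localRhoC at h
  have hev : ∀ᶠ m : ℕ in atTop, ‖(A ^ m).mulVec v‖ ^ ((1:ℝ)/m) < r :=
    eventually_lt_of_limsup_lt h (localRho_isBdd A v)
  obtain ⟨N, hN⟩ := eventually_atTop.mp hev
  set N' := max N 1 with hN'
  set C := 1 + ∑ k ∈ Finset.range N', ‖(A ^ k).mulVec v‖ / r ^ k with hCdef
  have hsum_nonneg : ∀ k ∈ Finset.range N', 0 ≤ ‖(A ^ k).mulVec v‖ / r ^ k := by
    intro k _; positivity
  have hC1 : 1 ≤ C := le_add_of_nonneg_right (Finset.sum_nonneg hsum_nonneg)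
  refine ⟨C, hC1, fun m => ?_⟩
  by_cases hm : m < N'
  · have h1 : ‖(A ^ m).mulVec v‖ / r ^ m ≤ C - 1 := by
      rw [hCdef]; simpa using Finset.single_le_sum hsum_nonneg (Finset.mem_range.mpr hm)
    have hrm : (0:ℝ) < r ^ m := pow_pos hr m
    calc ‖(A ^ m).mulVec v‖ = (‖(A ^ m).mulVec v‖ / r ^ m) * r ^ m := by field_simp
      _ ≤ (C - 1) * r ^ m := mul_le_mul_of_nonneg_right h1 hrm.le
      _ ≤ C * r ^ m := by nlinarith
  · push_neg at hm
    have hm1 : 1 ≤ m := le_trans (le_max_right N 1) hm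
    have hm' : m ≠ 0 := Nat.one_le_iff_ne_zero.mp hm1
    have hfm : ‖(A ^ m).mulVec v‖ ^ ((1:ℝ)/m) ≤ r := (hN m (le_trans (le_max_left N 1) hm)).le
    have : ‖(A ^ m).mulVec v‖ ≤ r ^ m := by
      calc ‖(A ^ m).mulVec v‖ = (‖(A ^ m).mulVec v‖ ^ ((1:ℝ)/m)) ^ m :=
            (pow_rpow_one_div (norm_nonneg _) hm').symm
        _ ≤ r ^ m := pow_le_pow_left₀ (Real.rpow_nonneg (norm_nonneg _) _) hfm m
    calc ‖(A ^ m).mulVec v‖ ≤ r ^ m := this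
      _ = 1 * r ^ m := (one_mul _).symm
      _ ≤ C * r ^ m := mul_le_mul_of_nonneg_right hC1 (pow_pos hr m).le

lemma le_localRho (A : Matrix (Fin n) (Fin n) ℂ) (v : Fin n → ℂ) {c s : ℝ}
    (hc : 0 < c) (hs : 0 < s)
    (h : ∀ᶠ m : ℕ in atTop, c * s ^ m ≤ ‖(A ^ m).mulVec v‖) : s ≤ localRhoC A v := by
  unfold localRhoC
  set c' := min c 1 with hc'def
  have hc'0 : 0 < c' := lt_min hc one_pos
  have hg : Tendsto (fun m : ℕ => c' ^ ((1:ℝ)/m) * s) atTop (𝓝 s) := by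
    simpa using (tendsto_rpow_one_div hc'0).mul_const s
  have hle : ∀ᶠ m : ℕ in atTop, c' ^ ((1:ℝ)/m) * s ≤ ‖(A ^ m).mulVec v‖ ^ ((1:ℝ)/m) := by
    filter_upwards [h, eventually_ge_atTop 1] with m hm hm1
    have hm' : m ≠ 0 := Nat.one_le_iff_ne_zero.mp hm1
    have h1 : c' * s ^ m ≤ ‖(A ^ m).mulVec v‖ :=
      le_trans (mul_le_mul_of_nonneg_right (min_le_left _ _) (pow_nonneg hs.le m)) hm
    calc c' ^ ((1:ℝ)/m) * s = (c' * s ^ m) ^ ((1:ℝ)/m) := by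
          rw [Real.mul_rpow hc'0.le (pow_nonneg hs.le m), rpow_pow_one_div hs.le hm']
      _ ≤ ‖(A ^ m).mulVec v‖ ^ ((1:ℝ)/m) :=
          Real.rpow_le_rpow (by positivity) h1 (by positivity)
  have := limsup_le_limsup hle (hg.isBoundedUnder_ge.isCoboundedUnder_le) (localRho_isBdd A v)
  rwa [hg.limsup_eq] at this

end quant

section mainlemmas
variable {n : ℕ}

lemma mulVec_finsum (M : Matrix (Fin n) (Fin n) ℂ) (f : ℕ → (Fin n → ℂ)) (s : Finset ℕ) :
    M.mulVec (∑ j ∈ s, f j) = ∑ j ∈ s, M.mulVec (f j) := by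
  have := map_sum M.mulVecLin f s
  simpa only [Matrix.mulVecLin_apply] using this

end mainlemmas

theorem stmt9 {n : ℕ} (A : Matrix (Fin n) (Fin n) ℂ) (b : Fin n → ℂ) (hb : b ≠ 0)
    (lam : ℂ) (hlam : localRhoC A b < ‖lam‖) :
    ∃ x0 : Fin n → ℂ,
      Tendsto (fun m : ℕ => ∑ j ∈ Finset.range (m + 1), lam⁻¹ ^ (j + 1) • (A ^ j).mulVec b)
        atTop (𝓝 x0) ∧
      (lam • (1 : Matrix (Fin n) (Fin n) ℂ) - A).mulVec x0 = b ∧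
      localRhoC A x0 = localRhoC A b ∧
      ∀ x : Fin n → ℂ, (lam • (1 : Matrix (Fin n) (Fin n) ℂ) - A).mulVec x = b → x ≠ x0 →
        localRhoC A x = ‖lam‖ := by
  have hρ0 : 0 ≤ localRhoC A b := localRhoC_nonneg A b
  set R : ℝ := ‖lam‖ with hRdef
  have hR0 : 0 < R := lt_of_le_of_lt hρ0 hlam
  have hlam0 : lam ≠ 0 := by
    intro hcon; rw [hcon] at hRdef; simp [hRdef] at hR0
  have hnl : ‖lam‖ = R := hRdef.symm
  have hnli : ‖lam⁻¹‖ = R⁻¹ := by rw [norm_inv, hnl]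
  set r : ℝ := (localRhoC A b + R)/2 with hrdef
  have hrρ : localRhoC A b < r := by rw [hrdef]; linarith
  have hrR : r < R := by rw [hrdef]; linarith
  have hr0 : 0 < r := lt_of_le_of_lt hρ0 hrρ
  clear_value R r
  obtain ⟨C, hC1, hCb⟩ := exists_bound_of_localRho_lt A b hr0 hrρ
  have hC0 : (0:ℝ) < C := lt_of_lt_of_le one_pos hC1
  set g : ℕ → (Fin n → ℂ) := fun j => lam⁻¹ ^ (j + 1) • (A ^ j).mulVec b with hgdef
  have hgnorm : ∀ j, ‖g j‖ ≤ (C/R) * (r/R)^j := by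
    intro j
    have h1 : ‖g j‖ = R⁻¹ ^ (j+1) * ‖(A ^ j).mulVec b‖ := by
      rw [hgdef]; simp only [norm_smul, norm_pow, hnli]
    rw [h1]
    have h2 : R⁻¹ ^ (j+1) * ‖(A ^ j).mulVec b‖ ≤ R⁻¹ ^ (j+1) * (C * r ^ j) :=
      mul_le_mul_of_nonneg_left (hCb j) (by positivity)
    refine le_trans h2 (le_of_eq ?_)
    rw [div_pow]; ring
  have hq0 : (0:ℝ) ≤ r/R := by positivity
  have hq1 : r/R < 1 := (div_lt_one hR0).mpr hrR
  have hgeo : Summable (fun j : ℕ => (C/R) * (r/R)^j) :=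
    (summable_geometric_of_lt_one hq0 hq1).mul_left _
  have hsummable : Summable g := Summable.of_norm_bounded hgeo hgnorm
  set x0 : Fin n → ℂ := ∑' j, g j with hx0def
  have hhs : HasSum g x0 := hsummable.hasSum
  have htend : Tendsto (fun m : ℕ => ∑ j ∈ Finset.range (m + 1), g j) atTop (𝓝 x0) := by
    have := hhs.tendsto_sum_nat.comp (Filter.tendsto_add_atTop_nat 1)
    simpa [Function.comp_def] using this
  -- the equation
  have hterm : ∀ j : ℕ, (lam • (1 : Matrix (Fin n) (Fin n) ℂ) - A).mulVec (g j)
      = lam⁻¹ ^ j • (A ^ j).mulVec b - lam⁻¹ ^ (j+1) • (A ^ (j+1)).mulVec b := by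
    intro j
    rw [hgdef, Matrix.sub_mulVec, Matrix.smul_mulVec, Matrix.one_mulVec]
    congr 1
    · rw [smul_smul]
      congr 1
      rw [pow_succ]
      field_simp
    · rw [Matrix.mulVec_smul, ← pow_mulVec_succ]
  have hkey : ∀ m : ℕ, (lam • (1 : Matrix (Fin n) (Fin n) ℂ) - A).mulVec
        (∑ j ∈ Finset.range (m+1), g j)
      = b - lam⁻¹ ^ (m+1) • (A ^ (m+1)).mulVec b := by
    intro m
    rw [mulVec_finsum]
    simp only [hterm]
    rw [Finset.sum_range_sub' (fun j => lam⁻¹ ^ j • (A ^ j).mulVec b) (m+1)]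
    simp [Matrix.one_mulVec]
  have hrem : Tendsto (fun m : ℕ => lam⁻¹ ^ (m+1) • (A ^ (m+1)).mulVec b) atTop (𝓝 0) := by
    apply squeeze_zero_norm' (a := fun m : ℕ => C * (r/R)^(m+1))
    · filter_upwards with m
      have h1 : ‖lam⁻¹ ^ (m+1) • (A ^ (m+1)).mulVec b‖
          = R⁻¹ ^ (m+1) * ‖(A ^ (m+1)).mulVec b‖ := by
        simp only [norm_smul, norm_pow, hnli]
      rw [h1]
      have h2 : R⁻¹ ^ (m+1) * ‖(A ^ (m+1)).mulVec b‖ ≤ R⁻¹ ^ (m+1) * (C * r ^ (m+1)) :=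
        mul_le_mul_of_nonneg_left (hCb (m+1)) (by positivity)
      refine le_trans h2 (le_of_eq ?_)
      rw [div_pow]; ring
    · have h3 : Tendsto (fun k : ℕ => C * (r/R)^k) atTop (𝓝 0) := by
        simpa using (tendsto_pow_atTop_nhds_zero_of_lt_one hq0 hq1).const_mul C
      have := h3.comp (Filter.tendsto_add_atTop_nat 1)
      simpa [Function.comp_def] using this
  have heq : (lam • (1 : Matrix (Fin n) (Fin n) ℂ) - A).mulVec x0 = b := by
    have hL : Tendsto (fun m : ℕ => (lam • (1 : Matrix (Fin n) (Fin n) ℂ) - A).mulVec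
        (∑ j ∈ Finset.range (m+1), g j)) atTop
        (𝓝 ((lam • (1 : Matrix (Fin n) (Fin n) ℂ) - A).mulVec x0)) := by
      have hc := (mvL (lam • (1 : Matrix (Fin n) (Fin n) ℂ) - A)).continuous
      have := (hc.tendsto x0).comp htend
      simpa only [Function.comp_def, mvL_apply] using this
    have hR' : Tendsto (fun m : ℕ => (lam • (1 : Matrix (Fin n) (Fin n) ℂ) - A).mulVec
        (∑ j ∈ Finset.range (m+1), g j)) atTop (𝓝 b) := by
      simp only [hkey]
      simpa using (tendsto_const_nhds (x := b) (f := atTop)).sub hrem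
    exact tendsto_nhds_unique hL hR'
  have hupper : ∀ r' : ℝ, localRhoC A b < r' → r' < R → localRhoC A x0 ≤ r' := by
    intro r' h1 h2
    have hr'0 : 0 < r' := lt_of_le_of_lt hρ0 h1
    obtain ⟨C', hC'1, hC'b⟩ := exists_bound_of_localRho_lt A b hr'0 h1
    have hC'0 : (0:ℝ) < C' := lt_of_lt_of_le one_pos hC'1
    have hq'0 : (0:ℝ) ≤ r'/R := by positivity
    have hq'1 : r'/R < 1 := (div_lt_one hR0).mpr h2
    set D : ℝ := (1 - r'/R)⁻¹ with hDdef
    have hD0 : 0 < D := by rw [hDdef]; exact inv_pos.mpr (by linarith)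
    have hbd : ∀ m, ‖(A ^ m).mulVec x0‖ ≤ (C' * D / R) * r' ^ m := by
      intro m
      have hmap : (A ^ m).mulVec x0 = ∑' j, (A ^ m).mulVec (g j) := by
        have := (mvL (A ^ m)).map_tsum hsummable
        simpa only [mvL_apply] using this
      have htermeq : ∀ j, (A ^ m).mulVec (g j) = lam⁻¹ ^ (j+1) • (A ^ (m+j)).mulVec b := by
        intro j
        rw [hgdef]
        simp only []
        rw [Matrix.mulVec_smul, Matrix.mulVec_mulVec, ← pow_add]
      have htn : ∀ j, ‖(A ^ m).mulVec (g j)‖ ≤ (C' * r' ^ m / R) * (r'/R) ^ j := by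
        intro j
        rw [htermeq j, norm_smul, norm_pow, hnli]
        calc R⁻¹ ^ (j+1) * ‖(A ^ (m+j)).mulVec b‖
            ≤ R⁻¹ ^ (j+1) * (C' * r' ^ (m+j)) :=
              mul_le_mul_of_nonneg_left (hC'b (m+j)) (by positivity)
          _ = (C' * r' ^ m / R) * (r'/R) ^ j := by
              rw [pow_add, div_pow]; ring
      have hsn : Summable (fun j => ‖(A ^ m).mulVec (g j)‖) := by
        apply Summable.of_nonneg_of_le (fun j => norm_nonneg _) htn
        exact (summable_geometric_of_lt_one hq'0 hq'1).mul_left _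
      calc ‖(A ^ m).mulVec x0‖ = ‖∑' j, (A ^ m).mulVec (g j)‖ := by rw [hmap]
        _ ≤ ∑' j, ‖(A ^ m).mulVec (g j)‖ := norm_tsum_le_tsum_norm hsn
        _ ≤ ∑' j, (C' * r' ^ m / R) * (r'/R) ^ j :=
            Summable.tsum_le_tsum htn hsn ((summable_geometric_of_lt_one hq'0 hq'1).mul_left _)
        _ = (C' * r' ^ m / R) * (1 - r'/R)⁻¹ := by
            rw [tsum_mul_left, tsum_geometric_of_lt_one hq'0 hq'1]
        _ = (C' * D / R) * r' ^ m := by rw [hDdef]; ring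
    apply localRho_le A x0 (C := max 1 (C'*D/R)) (le_max_left _ _) hr'0
    intro m
    exact le_trans (hbd m)
      (mul_le_mul_of_nonneg_right (le_max_right _ _) (pow_nonneg hr'0.le m))
  clear_value x0
  have hx0le : localRhoC A x0 ≤ localRhoC A b := by
    by_contra hcon
    push_neg at hcon
    have hmin : localRhoC A b < min (localRhoC A x0) R := lt_min hcon hlam
    set r' : ℝ := (localRhoC A b + min (localRhoC A x0) R)/2 with hr'def
    have h1 : localRhoC A b < r' := by rw [hr'def]; linarith
    have h2 : r' < min (localRhoC A x0) R := by rw [hr'def]; linarith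
    have h3 : r' < R := lt_of_lt_of_le h2 (min_le_right _ _)
    have h4 : r' < localRhoC A x0 := lt_of_lt_of_le h2 (min_le_left _ _)
    exact absurd (hupper r' h1 h3) (not_le.mpr h4)
  have hble : localRhoC A b ≤ localRhoC A x0 := by
    set E : ℝ := R + ‖mvL A‖ with hEdef
    have hE0 : 0 < E := by
      rw [hEdef]; have := norm_nonneg (mvL A); linarith
    have hKb : ∀ m, ‖(A ^ m).mulVec b‖ ≤ E * ‖(A ^ m).mulVec x0‖ := by
      intro m
      have hab : (A ^ m).mulVec b
          = lam • (A ^ m).mulVec x0 - A.mulVec ((A ^ m).mulVec x0) := by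
        conv_lhs => rw [← heq]
        rw [Matrix.mulVec_mulVec, Matrix.mul_sub, Matrix.mul_smul, Matrix.mul_one,
          Matrix.sub_mulVec, Matrix.smul_mulVec]
        rw [Matrix.mulVec_mulVec]
        rw [pow_mul_comm' A m]
      rw [hab]
      calc ‖lam • (A ^ m).mulVec x0 - A.mulVec ((A ^ m).mulVec x0)‖
          ≤ ‖lam • (A ^ m).mulVec x0‖ + ‖A.mulVec ((A ^ m).mulVec x0)‖ := norm_sub_le _ _
        _ ≤ R * ‖(A ^ m).mulVec x0‖ + ‖mvL A‖ * ‖(A ^ m).mulVec x0‖ := by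
            have h5 : ‖lam • (A ^ m).mulVec x0‖ = R * ‖(A ^ m).mulVec x0‖ := by
              rw [norm_smul, hnl]
            have h6 : ‖A.mulVec ((A ^ m).mulVec x0)‖ ≤ ‖mvL A‖ * ‖(A ^ m).mulVec x0‖ := by
              rw [← mvL_apply]; exact (mvL A).le_opNorm _
            linarith
        _ = E * ‖(A ^ m).mulVec x0‖ := by rw [hEdef]; ring
    by_contra hcon
    push_neg at hcon
    have hx00 : (0:ℝ) ≤ localRhoC A x0 := localRhoC_nonneg A x0
    set r' : ℝ := (localRhoC A x0 + localRhoC A b)/2 with hr'def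
    have h1 : localRhoC A x0 < r' := by rw [hr'def]; linarith
    have hr'0 : 0 < r' := lt_of_le_of_lt hx00 h1
    clear_value r'
    obtain ⟨C2, hC21, hC2⟩ := exists_bound_of_localRho_lt A x0 hr'0 h1
    have hfin : localRhoC A b ≤ r' := by
      apply localRho_le A b (C := max 1 (E * C2)) (le_max_left _ _) hr'0
      intro m
      calc ‖(A ^ m).mulVec b‖ ≤ E * ‖(A ^ m).mulVec x0‖ := hKb m
        _ ≤ E * (C2 * r' ^ m) := mul_le_mul_of_nonneg_left (hC2 m) hE0.le
        _ = (E * C2) * r' ^ m := by ring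
        _ ≤ max 1 (E * C2) * r' ^ m :=
            mul_le_mul_of_nonneg_right (le_max_right _ _) (pow_nonneg hr'0.le m)
    rw [hr'def] at hfin; linarith
  have hx0eq : localRhoC A x0 = localRhoC A b := le_antisymm hx0le hble
  refine ⟨x0, htend, heq, hx0eq, ?_⟩
  intro x hx hxne
  set y : Fin n → ℂ := x - x0 with hydef
  have hy0 : y ≠ 0 := sub_ne_zero.mpr hxne
  have hyn : (0:ℝ) < ‖y‖ := norm_pos_iff.mpr hy0
  have hAy : A.mulVec y = lam • y := by
    have h1 : (lam • (1 : Matrix (Fin n) (Fin n) ℂ) - A).mulVec y = 0 := by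
      rw [hydef, Matrix.mulVec_sub, hx, heq, sub_self]
    rw [Matrix.sub_mulVec, Matrix.smul_mulVec, Matrix.one_mulVec] at h1
    exact (sub_eq_zero.mp h1).symm
  have hAmy : ∀ m : ℕ, (A ^ m).mulVec y = lam ^ m • y := by
    intro m
    induction m with
    | zero => simp [Matrix.one_mulVec]
    | succ k ih =>
      rw [pow_mulVec_succ, ih, Matrix.mulVec_smul, hAy, smul_smul, ← pow_succ]
  have hAmx : ∀ m : ℕ, (A ^ m).mulVec x = (A ^ m).mulVec x0 + lam ^ m • y := by
    intro m
    have hxy : x = x0 + y := by rw [hydef]; abel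
    rw [hxy, Matrix.mulVec_add, hAmy]
  obtain ⟨K, hK1, hKx0⟩ := exists_bound_of_localRho_lt A x0 hr0 (by rw [hx0eq]; exact hrρ)
  have hK0 : (0:ℝ) < K := lt_of_lt_of_le one_pos hK1
  have hupp : localRhoC A x ≤ R := by
    apply localRho_le A x (C := K + ‖y‖) (by linarith [norm_nonneg y]) hR0
    intro m
    calc ‖(A ^ m).mulVec x‖ ≤ ‖(A ^ m).mulVec x0‖ + ‖lam ^ m • y‖ := by
          rw [hAmx m]; exact norm_add_le _ _
      _ = ‖(A ^ m).mulVec x0‖ + R ^ m * ‖y‖ := by rw [norm_smul, norm_pow, hnl]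
      _ ≤ K * r ^ m + R ^ m * ‖y‖ := by linarith [hKx0 m]
      _ ≤ K * R ^ m + R ^ m * ‖y‖ := by
          have h7 : r ^ m ≤ R ^ m := pow_le_pow_left₀ hr0.le hrR.le m
          nlinarith
      _ = (K + ‖y‖) * R ^ m := by ring
  have hlow : R ≤ localRhoC A x := by
    apply le_localRho A x (c := ‖y‖/2) (by linarith) hR0
    have htz : Tendsto (fun m : ℕ => K * (r/R) ^ m) atTop (𝓝 0) := by
      simpa using (tendsto_pow_atTop_nhds_zero_of_lt_one hq0 hq1).const_mul K
    filter_upwards [htz.eventually_lt_const (show (0:ℝ) < ‖y‖/2 by linarith)] with m hm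
    have h1 : K * r ^ m ≤ (‖y‖/2) * R ^ m := by
      have h2 : K * (r/R)^m * R^m ≤ (‖y‖/2) * R^m :=
        mul_le_mul_of_nonneg_right hm.le (by positivity)
      calc K * r ^ m = K * (r/R)^m * R^m := by rw [div_pow]; field_simp
        _ ≤ _ := h2
    have h3 : ‖lam ^ m • y‖ = R ^ m * ‖y‖ := by rw [norm_smul, norm_pow, hnl]
    have h4 : ‖lam ^ m • y‖ ≤ ‖(A ^ m).mulVec x‖ + ‖(A ^ m).mulVec x0‖ := by
      have h5 : lam ^ m • y = (A ^ m).mulVec x - (A ^ m).mulVec x0 := by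
        rw [hAmx m]; abel
      rw [h5]
      exact norm_sub_le _ _
    nlinarith [hKx0 m, mul_comm (R^m) ‖y‖]
  exact le_antisymm hupp hlow
end
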